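/- Let Γ be a finite graph, let X be a minimum vertex set meeting every embedded copy of D₅ in Γ, and suppose 5·|X| equals the minimal size of an Aut(Γ)-invariant such set. Then for every orbit A of Aut(Γ), either A ∩ X = ∅ or |A ∩ X| = |A|/5; moreover, the invariant set Y obtained from Theorem 1.1 is the union of those orbits A with |A ∩ X| ≥ |A|/5. -/

import Mathlib

open SimpleGraph

/-- The graph `D₅`: a triangle on vertices 0,1,2 with pendant vertices 3 (adjacent to 1)
and 4 (adjacent to 2). -/
def D5 : SimpleGraph (Fin 5) :=
  SimpleGraph.fromRel (fun a b =>
    (a, b) ∈ ({(0, 1), (1, 2), (0, 2), (1, 3), (2, 4)} : Set (Fin 5 × Fin 5)))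

/-- `f` is an embedded copy of the graph `K` in the graph `Γ` (a subgraph isomorphic to `K`). -/
def IsCopy {W V : Type*} (K : SimpleGraph W) (Γ : SimpleGraph V) (f : W → V) : Prop :=
  Function.Injective f ∧ ∀ a b, K.Adj a b → Γ.Adj (f a) (f b)

/-- `X` meets every subgraph of `Γ` isomorphic to `K`. -/
def IsTransversal {W V : Type*} (K : SimpleGraph W) (Γ : SimpleGraph V) (X : Set V) : Prop :=
  ∀ f : W → V, IsCopy K Γ f → ∃ a, f a ∈ X

/-- `X` is invariant under all automorphisms of `Γ`. -/
def GraphInvariant {V : Type*} (Γ : SimpleGraph V) (X : Set V) : Prop :=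
  ∀ σ : Γ ≃g Γ, (fun v => σ v) '' X = X

/-- The vertex representability `Υ_v(K, Γ)`. -/
noncomputable def upsilon {W V : Type*} (K : SimpleGraph W) (Γ : SimpleGraph V) : ℕ :=
  sInf {n | ∃ X : Set V, X.Finite ∧ X.ncard = n ∧ IsTransversal K Γ X}

/-- The symmetric vertex representability `Υ_v^sym(K, Γ)`. -/
noncomputable def upsilonSym {W V : Type*} (K : SimpleGraph W) (Γ : SimpleGraph V) : ℕ :=
  sInf {n | ∃ X : Set V, X.Finite ∧ X.ncard = n ∧ IsTransversal K Γ X ∧ GraphInvariant Γ X}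

/-- The orbit of a vertex under the automorphism group of `Γ`. -/
def orb {V : Type*} (Γ : SimpleGraph V) (v : V) : Set V := {w | ∃ σ : Γ ≃g Γ, σ v = w}

section Aux

open Finset

open scoped Classical

variable {V : Type*} (Γ : SimpleGraph V)

lemma mem_orb_self (v : V) : v ∈ orb Γ v := ⟨Iso.refl, rfl⟩

lemma orb_eq {v y : V} (h : y ∈ orb Γ v) : orb Γ y = orb Γ v := by
  obtain ⟨σ, rfl⟩ := h
  ext w
  constructor
  · rintro ⟨τ, rfl⟩; exact ⟨σ.trans τ, rfl⟩
  · rintro ⟨τ, rfl⟩; exact ⟨σ.symm.trans τ, by simp⟩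

/-- The orbit setoid on vertices. -/
def orbSetoid : Setoid V :=
  ⟨fun a b => a ∈ orb Γ b,
    ⟨fun a => mem_orb_self Γ a,
     by rintro a b ⟨σ, rfl⟩; exact ⟨σ.symm, by simp⟩,
     by rintro a b c ⟨σ, rfl⟩ ⟨τ, rfl⟩; exact ⟨τ.trans σ, rfl⟩⟩⟩

noncomputable instance autFintype [Fintype V] : Fintype (Γ ≃g Γ) :=
  Fintype.ofInjective (fun σ => ((σ : Γ ≃g Γ) : V → V)) RelIso.coe_fn_injective

variable [Fintype V]

/-- The set of automorphisms sending `v` to `w`. -/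
noncomputable def fib (v w : V) : Finset (Γ ≃g Γ) :=
  univ.filter (fun σ => σ v = w)

lemma fib_card_eq {v w : V} (h : w ∈ orb Γ v) : (fib Γ v w).card = (fib Γ v v).card := by
  obtain ⟨τ, hτ⟩ := h
  apply Finset.card_nbij' (fun σ => σ.trans τ.symm) (fun σ => σ.trans τ)
  · intro σ hσ
    simp only [fib, Finset.mem_coe, mem_filter, mem_univ, true_and] at hσ ⊢
    rw [RelIso.trans_apply, hσ, ← hτ, RelIso.symm_apply_apply]
  · intro σ hσ
    simp only [fib, Finset.mem_coe, mem_filter, mem_univ, true_and] at hσ ⊢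
    rw [RelIso.trans_apply, hσ, hτ]
  · intro σ _
    exact RelIso.ext (fun x => by simp)
  · intro σ _
    exact RelIso.ext (fun x => by simp)

lemma fib_card_pos (v : V) : 0 < (fib Γ v v).card := by
  apply Finset.card_pos.mpr
  exact ⟨Iso.refl, by simp [fib]⟩

lemma card_aut (v : V) :
    Fintype.card (Γ ≃g Γ) = (orb Γ v).ncard * (fib Γ v v).card := by
  rw [← Finset.card_univ,
    Finset.card_eq_sum_card_fiberwise (f := fun σ : Γ ≃g Γ => σ v)
      (t := (orb Γ v).toFinset) (fun σ _ => by simp only [Finset.mem_coe, Set.coe_toFinset, Set.mem_toFinset]; exact ⟨σ, rfl⟩)]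
  have hconst : ∀ w ∈ (orb Γ v).toFinset,
      (Finset.univ.filter (fun σ : Γ ≃g Γ => σ v = w)).card = (fib Γ v v).card :=
    fun w hw => fib_card_eq Γ (v := v) (w := w) (by simpa using hw)
  rw [Finset.sum_congr rfl hconst, Finset.sum_const, smul_eq_mul,
    Set.ncard_eq_toFinset_card']

lemma card_hit (X : Set V) (v : V) :
    (univ.filter (fun σ : Γ ≃g Γ => σ v ∈ X)).card
      = (orb Γ v ∩ X).ncard * (fib Γ v v).card := by
  rw [Finset.card_eq_sum_card_fiberwise (f := fun σ : Γ ≃g Γ => σ v)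
      (t := (orb Γ v ∩ X).toFinset)
      (fun σ hσ => by
        simp only [Finset.mem_coe, mem_filter] at hσ
        simp only [Finset.mem_coe, Set.coe_toFinset, Set.mem_toFinset, Set.mem_inter_iff]
        exact ⟨⟨σ, rfl⟩, hσ.2⟩)]
  have hfibs : ∀ w ∈ (orb Γ v ∩ X).toFinset,
      ((univ.filter (fun σ : Γ ≃g Γ => σ v ∈ X)).filter
        (fun σ => σ v = w)).card = (fib Γ v v).card := by
    intro w hw
    simp only [Set.mem_toFinset, Set.mem_inter_iff] at hw
    rw [← fib_card_eq Γ hw.1]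
    congr 1
    ext σ
    simp only [fib, mem_filter, mem_univ, true_and]
    constructor
    · exact fun h => h.2
    · intro h; exact ⟨h ▸ hw.2, h⟩
  rw [Finset.sum_congr rfl hfibs, Finset.sum_const, smul_eq_mul,
    Set.ncard_eq_toFinset_card']

lemma Y_transversal {W : Type*} (K : SimpleGraph W) [Fintype W] (X : Set V)
    (hX : IsTransversal K Γ X) (hW : Fintype.card W = 5) :
    IsTransversal K Γ {y | (orb Γ y).ncard ≤ 5 * (orb Γ y ∩ X).ncard} := by
  intro f hf
  by_contra hc
  push_neg at hc
  simp only [Set.mem_setOf_eq, not_le] at hc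
  have hcov : (univ : Finset (Γ ≃g Γ)) ⊆
      univ.biUnion (fun i : W => univ.filter (fun σ : Γ ≃g Γ => σ (f i) ∈ X)) := by
    intro σ _
    obtain ⟨i, hi⟩ := hX (fun a => σ (f a))
      ⟨σ.injective.comp hf.1, fun a b hab => σ.map_adj_iff.mpr (hf.2 a b hab)⟩
    simp only [mem_biUnion, mem_filter, mem_univ, true_and]
    exact ⟨i, hi⟩
  have h1 : Fintype.card (Γ ≃g Γ) ≤
      ∑ i : W, (univ.filter (fun σ : Γ ≃g Γ => σ (f i) ∈ X)).card := by
    calc Fintype.card (Γ ≃g Γ) = (univ : Finset (Γ ≃g Γ)).card := Finset.card_univ.symm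
      _ ≤ (univ.biUnion (fun i : W =>
            univ.filter (fun σ : Γ ≃g Γ => σ (f i) ∈ X))).card := Finset.card_le_card hcov
      _ ≤ ∑ i : W, (univ.filter (fun σ : Γ ≃g Γ => σ (f i) ∈ X)).card :=
            Finset.card_biUnion_le
  have h2 : ∀ i : W,
      5 * (univ.filter (fun σ : Γ ≃g Γ => σ (f i) ∈ X)).card + 1
        ≤ Fintype.card (Γ ≃g Γ) := by
    intro i
    have hlt := hc i
    have hs := fib_card_pos Γ (f i)
    rw [card_hit Γ X (f i), card_aut Γ (f i)]
    nlinarith [hlt, hs]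
  have h3 : ∑ i : W, (5 * (univ.filter (fun σ : Γ ≃g Γ => σ (f i) ∈ X)).card + 1)
      ≤ ∑ _i : W, Fintype.card (Γ ≃g Γ) :=
    Finset.sum_le_sum (fun i _ => h2 i)
  rw [Finset.sum_add_distrib, ← Finset.mul_sum, Finset.sum_const, Finset.sum_const,
    Finset.card_univ, hW, smul_eq_mul, smul_eq_mul, mul_one] at h3
  omega

lemma Y_invariant (X : Set V) :
    GraphInvariant Γ {y | (orb Γ y).ncard ≤ 5 * (orb Γ y ∩ X).ncard} := by
  intro σ
  have horb : ∀ y : V, orb Γ (σ y) = orb Γ y := fun y => orb_eq Γ ⟨σ, rfl⟩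
  ext y
  simp only [Set.mem_image, Set.mem_setOf_eq]
  constructor
  · rintro ⟨z, hz, rfl⟩
    rwa [horb]
  · intro hy
    refine ⟨σ.symm y, ?_, σ.apply_symm_apply y⟩
    have h2 : orb Γ (σ.symm y) = orb Γ y := by
      conv_rhs => rw [← σ.apply_symm_apply y]
      rw [horb]
    rw [h2]
    exact hy

end Aux

/-- Let `Γ` be a finite graph, let `X` be a minimum vertex set meeting every embedded copy
of `D₅` in `Γ`, and suppose `5·|X|` equals the minimal size of an `Aut(Γ)`-invariant such
set. Then for every orbit `A` of `Aut(Γ)`, either `A ∩ X = ∅` or `|A ∩ X| = |A|/5`;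
moreover the invariant set `Y` of Theorem 1.1, namely
`Y = {y | |Orb(y) ∩ X| ≥ |Orb(y)|/5}`, is the union of those orbits `A` with
`|A ∩ X| ≥ |A|/5`. -/
theorem orbit_intersection_dichotomy {V : Type*} [Fintype V] (Γ : SimpleGraph V)
    (X : Set V) (hX : IsTransversal D5 Γ X) (hmin : X.ncard = upsilon D5 Γ)
    (hsym : upsilonSym D5 Γ = 5 * X.ncard) :
    (∀ v : V, orb Γ v ∩ X = ∅ ∨ 5 * (orb Γ v ∩ X).ncard = (orb Γ v).ncard) ∧
    {y : V | (orb Γ y).ncard ≤ 5 * (orb Γ y ∩ X).ncard} =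
      ⋃ v ∈ {v : V | (orb Γ v).ncard ≤ 5 * (orb Γ v ∩ X).ncard}, orb Γ v := by
  classical
  set Y : Set V := {y : V | (orb Γ y).ncard ≤ 5 * (orb Γ y ∩ X).ncard} with hYdef
  have hYorb : ∀ {a b : V}, a ∈ orb Γ b → (a ∈ Y ↔ b ∈ Y) := by
    intro a b h
    simp only [hYdef, Set.mem_setOf_eq, orb_eq Γ h]
  have part2 : Y = ⋃ v ∈ {v : V | (orb Γ v).ncard ≤ 5 * (orb Γ v ∩ X).ncard}, orb Γ v := by
    ext y
    simp only [Set.mem_iUnion, Set.mem_setOf_eq, exists_prop]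
    constructor
    · intro hy
      exact ⟨y, hy, mem_orb_self Γ y⟩
    · rintro ⟨v, hv, hyv⟩
      show (orb Γ y).ncard ≤ 5 * (orb Γ y ∩ X).ncard
      rw [orb_eq Γ hyv]
      exact hv
  refine ⟨?_, part2⟩
  -- `Y` is an invariant transversal, so `5|X| ≤ |Y|`.
  have hYmem : Y.ncard ∈
      {n | ∃ Z : Set V, Z.Finite ∧ Z.ncard = n ∧ IsTransversal D5 Γ Z ∧ GraphInvariant Γ Z} :=
    ⟨Y, Set.toFinite _, rfl, Y_transversal Γ D5 X hX (by simp), Y_invariant Γ X⟩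
  have h5 : 5 * X.ncard ≤ Y.ncard := by
    rw [← hsym]
    exact Nat.sInf_le hYmem
  -- Orbit decomposition of `Y` and `X ∩ Y`.
  let s : Setoid V := orbSetoid Γ
  let T : Finset (Quotient s) := Finset.univ.filter (fun q => q.out ∈ Y)
  have hfiber : ∀ (q : Quotient s) (y : V), Quotient.mk s y = q ↔ y ∈ orb Γ q.out := by
    intro q y
    conv_lhs => rw [← Quotient.out_eq q]
    rw [Quotient.eq]
    exact Iff.rfl
  have hYcard : Y.ncard = ∑ q ∈ T, (orb Γ q.out).ncard := by
    rw [Set.ncard_eq_toFinset_card',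
      Finset.card_eq_sum_card_fiberwise (f := fun y => Quotient.mk s y)
        (t := Finset.univ) (fun y _ => Finset.mem_univ _)]
    rw [← Finset.sum_subset (Finset.subset_univ T)]
    · apply Finset.sum_congr rfl
      intro q hq
      have hq' : q.out ∈ Y := (Finset.mem_filter.mp hq).2
      rw [Set.ncard_eq_toFinset_card']
      congr 1
      ext y
      simp only [Finset.mem_filter, Set.mem_toFinset]
      constructor
      · intro h
        exact (hfiber q y).mp h.2
      · intro h
        exact ⟨(hYorb h).mpr hq', (hfiber q y).mpr h⟩
    · intro q _ hq
      have hq' : q.out ∉ Y := fun h => hq (Finset.mem_filter.mpr ⟨Finset.mem_univ _, h⟩)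
      rw [Finset.card_eq_zero]
      ext y
      simp only [Finset.mem_filter, Set.mem_toFinset, Finset.notMem_empty, iff_false]
      rintro ⟨hy, hyq⟩
      exact hq' ((hYorb ((hfiber q y).mp hyq)).mp hy)
  have hXYcard : (X ∩ Y).ncard = ∑ q ∈ T, (orb Γ q.out ∩ X).ncard := by
    rw [Set.ncard_eq_toFinset_card',
      Finset.card_eq_sum_card_fiberwise (f := fun y => Quotient.mk s y)
        (t := Finset.univ) (fun y _ => Finset.mem_univ _)]
    rw [← Finset.sum_subset (Finset.subset_univ T)]
    · apply Finset.sum_congr rfl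
      intro q hq
      have hq' : q.out ∈ Y := (Finset.mem_filter.mp hq).2
      rw [Set.ncard_eq_toFinset_card']
      congr 1
      ext y
      simp only [Finset.mem_filter, Set.mem_toFinset, Set.mem_inter_iff]
      constructor
      · rintro ⟨⟨hx, _⟩, hyq⟩
        exact ⟨(hfiber q y).mp hyq, hx⟩
      · rintro ⟨horb, hx⟩
        exact ⟨⟨hx, (hYorb horb).mpr hq'⟩, (hfiber q y).mpr horb⟩
    · intro q _ hq
      have hq' : q.out ∉ Y := fun h => hq (Finset.mem_filter.mpr ⟨Finset.mem_univ _, h⟩)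
      rw [Finset.card_eq_zero]
      ext y
      simp only [Finset.mem_filter, Set.mem_toFinset, Set.mem_inter_iff,
        Finset.notMem_empty, iff_false]
      rintro ⟨⟨_, hy⟩, hyq⟩
      exact hq' ((hYorb ((hfiber q y).mp hyq)).mp hy)
  have hterm_le : ∀ q ∈ T, (orb Γ q.out).ncard ≤ 5 * (orb Γ q.out ∩ X).ncard := by
    intro q hq
    exact (Finset.mem_filter.mp hq).2
  have hYle : Y.ncard ≤ 5 * (X ∩ Y).ncard := by
    rw [hYcard, hXYcard, Finset.mul_sum]
    exact Finset.sum_le_sum hterm_le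
  have hXY : (X ∩ Y).ncard ≤ X.ncard :=
    Set.ncard_le_ncard Set.inter_subset_left (Set.toFinite _)
  have hXYeq : (X ∩ Y).ncard = X.ncard := by omega
  have hYeq : Y.ncard = 5 * (X ∩ Y).ncard := by omega
  have hXsub : X ⊆ Y := by
    have : X ∩ Y = X :=
      Set.eq_of_subset_of_ncard_le Set.inter_subset_left (by omega) (Set.toFinite _)
    intro x hx
    rw [← this] at hx
    exact hx.2
  have hterm_eq : ∀ q ∈ T, (orb Γ q.out).ncard = 5 * (orb Γ q.out ∩ X).ncard := by
    apply (Finset.sum_eq_sum_iff_of_le hterm_le).mp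
    rw [← hYcard, ← Finset.mul_sum, ← hXYcard]
    exact hYeq
  intro v
  by_cases h : orb Γ v ∩ X = ∅
  · exact Or.inl h
  · right
    obtain ⟨x, hx⟩ := Set.nonempty_iff_ne_empty.mpr h
    have hxY : x ∈ Y := hXsub hx.2
    have hvY : v ∈ Y := (hYorb hx.1).mp hxY
    set q : Quotient s := Quotient.mk s v with hqdef
    have hout : q.out ∈ orb Γ v := Quotient.mk_out (s := s) v
    have hqT : q ∈ T :=
      Finset.mem_filter.mpr ⟨Finset.mem_univ _, (hYorb hout).mpr hvY⟩
    have := hterm_eq q hqT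
    rw [orb_eq Γ hout] at this
    omega
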